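/- For a linear model f(X) = Σ_j a_j X_j, the interventional SHAP part of feature i at sample x equals φ_{i,int} = (1/M!) Σ_R a_i (x_i − E[X_i | X_{S^R} = x_{S^R}]) = (1/M!) Σ_R (f(x) − f([x_{\setminus i}, E[X_i | X_{S^R} = x_{S^R}]])). -/
import Mathlib


/-- `upd x S z` is the vector `[x_S, z_{S̄}]`. -/
noncomputable def upd {M : ℕ} (x : Fin M → ℝ) (S : Finset (Fin M)) (z : Fin M → ℝ) :
    Fin M → ℝ := fun j => if j ∈ S then x j else z j

/-- The coalition `S^R` of features preceding feature `i` in the permutation `R`. -/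
def SR {M : ℕ} (i : Fin M) (R : Equiv.Perm (Fin M)) : Finset (Fin M) :=
  Finset.univ.filter fun j => R.symm j < R.symm i

/-- For the linear model `f(X) = Σ_j a_j X_j`, the interventional SHAP part of feature `i`
at sample `x` equals `(1/M!) Σ_R a_i (x_i − E[X_i | X_{S^R} = x_{S^R}])`, which also equals
`(1/M!) Σ_R (f(x) − f([x_{∖i}, E[X_i | X_{S^R} = x_{S^R}]]))`.
`CE S g` denotes the conditional expectation `E[g(X) | X_S = x_S]`, which is linear and
maps constants to themselves. -/
theorem linear_interventional_part {M : ℕ} (i : Fin M) (a : Fin M → ℝ) (x : Fin M → ℝ)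
    (CE : Finset (Fin M) → ((Fin M → ℝ) → ℝ) → ℝ)
    (hlin : ∀ (S : Finset (Fin M)) (c : ℝ) (g h : (Fin M → ℝ) → ℝ),
      CE S (fun z => c * g z + h z) = c * CE S g + CE S h)
    (hconst : ∀ (S : Finset (Fin M)) (c : ℝ), CE S (fun _ => c) = c) :
    ((1 / (M.factorial : ℝ)) * ∑ R : Equiv.Perm (Fin M),
        (CE (SR i R) (fun z => ∑ j, a j * upd x (insert i (SR i R)) z j)
          - CE (SR i R) (fun z => ∑ j, a j * upd x (SR i R) z j))
      = (1 / (M.factorial : ℝ)) * ∑ R : Equiv.Perm (Fin M),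
          a i * (x i - CE (SR i R) (fun z => z i)))
    ∧ (1 / (M.factorial : ℝ)) * ∑ R : Equiv.Perm (Fin M),
        a i * (x i - CE (SR i R) (fun z => z i))
      = (1 / (M.factorial : ℝ)) * ∑ R : Equiv.Perm (Fin M),
          ((∑ j, a j * x j)
            - ∑ j, a j * Function.update x i (CE (SR i R) (fun z => z i)) j) := by
  constructor
  · congr 1
    apply Finset.sum_congr rfl
    intro R _
    set S := SR i R with hS
    have hiS : i ∉ S := by simp [hS, SR]
    have hfun : (fun z : Fin M → ℝ => ∑ j, a j * upd x (insert i S) z j)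
        = fun z => (-(a i)) * (fun z : Fin M → ℝ => z i) z
            + ((a i * x i) * (fun _ : Fin M → ℝ => (1:ℝ)) z
              + (fun z : Fin M → ℝ => ∑ j, a j * upd x S z j) z) := by
      funext z
      simp only
      rw [Fintype.sum_eq_add_sum_compl i (fun j => a j * upd x (insert i S) z j),
          Fintype.sum_eq_add_sum_compl i (fun j => a j * upd x S z j)]
      have h1 : upd x (insert i S) z i = x i := by simp [upd]
      have h2 : upd x S z i = z i := by simp [upd, hiS]
      have h3 : ∀ j ∈ ({i}ᶜ : Finset (Fin M)), a j * upd x (insert i S) z j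
          = a j * upd x S z j := by
        intro j hj
        have hji : j ≠ i := by simpa using hj
        simp [upd, Finset.mem_insert, hji]
      rw [Finset.sum_congr rfl h3, h1, h2]
      ring
    rw [hfun, hlin, hlin, hconst]
    ring
  · congr 1
    apply Finset.sum_congr rfl
    intro R _
    rw [Fintype.sum_eq_add_sum_compl i (fun j => a j * x j),
        Fintype.sum_eq_add_sum_compl i
          (fun j => a j * Function.update x i (CE (SR i R) (fun z => z i)) j)]
    have h3 : ∀ j ∈ ({i}ᶜ : Finset (Fin M)),
        a j * Function.update x i (CE (SR i R) (fun z => z i)) j = a j * x j := by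
      intro j hj
      have hji : j ≠ i := by simpa using hj
      simp [Function.update, hji]
    rw [Finset.sum_congr rfl h3, Function.update_self]
    ring
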